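/- In a finite MDP with population-dependent reward R(·,μ) = ∇F(μ) for F strictly concave and differentiable, the Nash equilibrium occupancy measure is unique: if π and π' are both Nash equilibria (zero exploitability), then μ_π = μ_{π'}. -/

import Mathlib

noncomputable section
open scoped BigOperators
set_option maxHeartbeats 1600000

def IsDist {X : Type*} [Fintype X] (p : X → ℝ) : Prop :=
  (∀ x, 0 ≤ p x) ∧ ∑ x, p x = 1

def IsPolicy {S A : Type*} [Fintype A] (π : S → A → ℝ) : Prop :=
  ∀ s, IsDist (π s)

def IsKernel {S A : Type*} [Fintype S] (P : S → A → S → ℝ) : Prop :=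
  ∀ s a, IsDist (P s a)

/-- Probability of (S_t = s, A_t = a) under policy `π`, kernel `P`, initial law `ρ0`. -/
def saDist {S A : Type*} [Fintype S] [Fintype A] (P : S → A → S → ℝ) (π : S → A → ℝ)
    (ρ0 : S → ℝ) : ℕ → S → A → ℝ
  | 0 => fun s a => ρ0 s * π s a
  | (t + 1) => fun s a => π s a * ∑ s' : S, ∑ a' : A, P s' a' s * saDist P π ρ0 t s' a'

/-- Discounted state-action occupancy measure of policy `π`. -/
def occ {S A : Type*} [Fintype S] [Fintype A] (γ : ℝ) (P : S → A → S → ℝ)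
    (π : S → A → ℝ) (ρ0 : S → ℝ) (s : S) (a : A) : ℝ :=
  (1 - γ) * ∑' t : ℕ, γ ^ t * saDist P π ρ0 t s a

/-- The Bellman flow constraint set `M`. -/
def InFlow {S A : Type*} [Fintype S] [Fintype A] (γ : ℝ) (P : S → A → S → ℝ)
    (ρ0 : S → ℝ) (μ : S → A → ℝ) : Prop :=
  IsDist (fun p : S × A => μ p.1 p.2) ∧
  ∀ s, ∑ a, μ s a = (1 - γ) * ρ0 s + γ * ∑ s' : S, ∑ a' : A, P s' a' s * μ s' a'

open scoped RealInnerProductSpace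

/-- The occupancy measure of `π` viewed as a point of Euclidean space `ℝ^{S×A}`. -/
def occE {S A : Type*} [Fintype S] [Fintype A] (γ : ℝ) (P : S → A → S → ℝ)
    (π : S → A → ℝ) (ρ0 : S → ℝ) : EuclideanSpace ℝ (S × A) :=
  WithLp.toLp 2 (fun p : S × A => occ γ P π ρ0 p.1 p.2)

/-- The Bellman flow polytope `M` inside Euclidean space `ℝ^{S×A}`. -/
def MflowE {S A : Type*} [Fintype S] [Fintype A] (γ : ℝ) (P : S → A → S → ℝ)
    (ρ0 : S → ℝ) : Set (EuclideanSpace ℝ (S × A)) :=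
  {μ | (∀ p, 0 ≤ μ p) ∧ (∑ p : S × A, μ p = 1) ∧
    ∀ s, ∑ a, μ (s, a) = (1 - γ) * ρ0 s + γ * ∑ s' : S, ∑ a' : A, P s' a' s * μ (s', a')}


section aux

variable {S A : Type*} [Fintype S] [Fintype A]

lemma saDist_nonneg {P : S → A → S → ℝ} (hP : IsKernel P) {π : S → A → ℝ} (hπ : IsPolicy π)
    {ρ0 : S → ℝ} (hρ0 : IsDist ρ0) : ∀ t s a, 0 ≤ saDist P π ρ0 t s a := by
  intro t
  induction t with
  | zero => exact fun s a => mul_nonneg (hρ0.1 s) ((hπ s).1 a)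
  | succ t ih =>
    intro s a
    exact mul_nonneg ((hπ s).1 a) (Finset.sum_nonneg fun s' _ =>
      Finset.sum_nonneg fun a' _ => mul_nonneg ((hP s' a').1 s) (ih s' a'))

lemma saDist_total {P : S → A → S → ℝ} (hP : IsKernel P) {π : S → A → ℝ} (hπ : IsPolicy π)
    {ρ0 : S → ℝ} (hρ0 : IsDist ρ0) :
    ∀ t, ∑ s : S, ∑ a : A, saDist P π ρ0 t s a = 1 := by
  intro t
  induction t with
  | zero =>
    simp only [saDist, ← Finset.mul_sum]
    calc ∑ s : S, ρ0 s * ∑ a : A, π s a = ∑ s : S, ρ0 s :=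
          Finset.sum_congr rfl fun s _ => by rw [(hπ s).2, mul_one]
      _ = 1 := hρ0.2
  | succ t ih =>
    simp only [saDist]
    have h1 : ∀ s : S, ∑ a : A, π s a * (∑ s' : S, ∑ a' : A, P s' a' s * saDist P π ρ0 t s' a')
        = ∑ s' : S, ∑ a' : A, P s' a' s * saDist P π ρ0 t s' a' := fun s => by
      rw [← Finset.sum_mul, (hπ s).2, one_mul]
    rw [Finset.sum_congr rfl fun s _ => h1 s, Finset.sum_comm]
    have h2 : ∀ s' : S, ∑ s : S, ∑ a' : A, P s' a' s * saDist P π ρ0 t s' a'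
        = ∑ a' : A, saDist P π ρ0 t s' a' := by
      intro s'
      rw [Finset.sum_comm]
      exact Finset.sum_congr rfl fun a' _ => by rw [← Finset.sum_mul, (hP s' a').2, one_mul]
    rw [Finset.sum_congr rfl fun s' _ => h2 s', ih]

lemma saDist_le_one {P : S → A → S → ℝ} (hP : IsKernel P) {π : S → A → ℝ} (hπ : IsPolicy π)
    {ρ0 : S → ℝ} (hρ0 : IsDist ρ0) : ∀ t s a, saDist P π ρ0 t s a ≤ 1 := by
  intro t s a
  calc saDist P π ρ0 t s a ≤ ∑ a' : A, saDist P π ρ0 t s a' :=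
        Finset.single_le_sum (fun a' _ => saDist_nonneg hP hπ hρ0 t s a') (Finset.mem_univ a)
    _ ≤ ∑ s' : S, ∑ a' : A, saDist P π ρ0 t s' a' :=
        Finset.single_le_sum (fun s' _ => Finset.sum_nonneg fun a' _ =>
          saDist_nonneg hP hπ hρ0 t s' a') (Finset.mem_univ s)
    _ = 1 := saDist_total hP hπ hρ0 t

lemma saDist_summable {γ : ℝ} (hγ : γ ∈ Set.Ioo (0:ℝ) 1) {P : S → A → S → ℝ} (hP : IsKernel P)
    {π : S → A → ℝ} (hπ : IsPolicy π) {ρ0 : S → ℝ} (hρ0 : IsDist ρ0) (s : S) (a : A) :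
    Summable (fun t : ℕ => γ ^ t * saDist P π ρ0 t s a) := by
  refine Summable.of_nonneg_of_le
    (fun t => mul_nonneg (pow_nonneg hγ.1.le t) (saDist_nonneg hP hπ hρ0 t s a))
    (fun t => ?_) (summable_geometric_of_lt_one hγ.1.le hγ.2)
  calc γ ^ t * saDist P π ρ0 t s a ≤ γ ^ t * 1 :=
        mul_le_mul_of_nonneg_left (saDist_le_one hP hπ hρ0 t s a) (pow_nonneg hγ.1.le t)
    _ = γ ^ t := mul_one _

/-- Occupancy measures lie in the Bellman flow polytope. -/
lemma occE_mem_MflowE {γ : ℝ} (hγ : γ ∈ Set.Ioo (0:ℝ) 1) {P : S → A → S → ℝ} (hP : IsKernel P)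
    {π : S → A → ℝ} (hπ : IsPolicy π) {ρ0 : S → ℝ} (hρ0 : IsDist ρ0) :
    occE γ P π ρ0 ∈ MflowE γ P ρ0 := by
  have hγ1 : (0:ℝ) < 1 - γ := by linarith [hγ.2]
  have hsumm := fun s a => saDist_summable hγ hP hπ hρ0 s a
  set T : S → A → ℝ := fun s a => ∑' t : ℕ, γ ^ t * saDist P π ρ0 t s a with hTdef
  have hoccT : ∀ s a, occ γ P π ρ0 s a = (1 - γ) * T s a := fun s a => rfl
  refine ⟨?_, ?_, ?_⟩
  · intro p
    exact mul_nonneg hγ1.le (tsum_nonneg fun t =>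
      mul_nonneg (pow_nonneg hγ.1.le t) (saDist_nonneg hP hπ hρ0 t p.1 p.2))
  · have e : ∑ p : S × A, occE γ P π ρ0 p
        = (1 - γ) * ∑' t : ℕ, ∑ p : S × A, γ ^ t * saDist P π ρ0 t p.1 p.2 := by
      calc ∑ p : S × A, occE γ P π ρ0 p
          = ∑ p : S × A, (1 - γ) * ∑' t : ℕ, γ ^ t * saDist P π ρ0 t p.1 p.2 :=
            Finset.sum_congr rfl fun p _ => rfl
        _ = (1 - γ) * ∑ p : S × A, ∑' t : ℕ, γ ^ t * saDist P π ρ0 t p.1 p.2 :=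
            (Finset.mul_sum _ _ _).symm
        _ = (1 - γ) * ∑' t : ℕ, ∑ p : S × A, γ ^ t * saDist P π ρ0 t p.1 p.2 := by
            rw [← Summable.tsum_finsetSum (fun p _ => hsumm p.1 p.2)]
    rw [e]
    have h2 : ∀ t : ℕ, ∑ p : S × A, γ ^ t * saDist P π ρ0 t p.1 p.2 = γ ^ t := by
      intro t
      rw [Fintype.sum_prod_type]
      simp only [← Finset.mul_sum]
      rw [saDist_total hP hπ hρ0 t, mul_one]
    rw [tsum_congr h2, tsum_geometric_of_lt_one hγ.1.le hγ.2]
    exact mul_inv_cancel₀ hγ1.ne'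
  · intro s
    have hm0 : ∑ a : A, saDist P π ρ0 0 s a = ρ0 s := by
      simp only [saDist, ← Finset.mul_sum, (hπ s).2, mul_one]
    have hmsucc : ∀ t, ∑ a : A, saDist P π ρ0 (t+1) s a
        = ∑ s' : S, ∑ a' : A, P s' a' s * saDist P π ρ0 t s' a' := fun t => by
      simp only [saDist]
      rw [← Finset.sum_mul, (hπ s).2, one_mul]
    have hsm : ∀ s' a', Summable (fun t : ℕ => γ ^ t * (P s' a' s * saDist P π ρ0 t s' a')) := by
      intro s' a'
      exact ((hsumm s' a').mul_left (P s' a' s)).congr fun t => by ring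
    have hmargsumm : Summable (fun t : ℕ => γ ^ t * ∑ a : A, saDist P π ρ0 t s a) := by
      have h : Summable (fun t : ℕ => ∑ a : A, γ ^ t * saDist P π ρ0 t s a) :=
        summable_sum fun a _ => hsumm s a
      exact h.congr fun t => by rw [Finset.mul_sum]
    have key : ∑ a : A, occE γ P π ρ0 (s, a)
        = (1 - γ) * ∑' t : ℕ, γ ^ t * ∑ a : A, saDist P π ρ0 t s a := by
      have e0 : ∑ a : A, occE γ P π ρ0 (s, a)
          = (1 - γ) * ∑ a : A, ∑' t : ℕ, γ ^ t * saDist P π ρ0 t s a := by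
        rw [Finset.mul_sum]
        exact Finset.sum_congr rfl fun a _ => rfl
      rw [e0, ← Summable.tsum_finsetSum (fun a _ => hsumm s a)]
      congr 1
      exact tsum_congr fun t => by rw [Finset.mul_sum]
    rw [key, Summable.tsum_eq_zero_add hmargsumm]
    simp only [pow_zero, one_mul, hm0]
    have h3 : ∀ t : ℕ, γ ^ (t+1) * ∑ a : A, saDist P π ρ0 (t+1) s a
        = γ * (γ ^ t * ∑ s' : S, ∑ a' : A, P s' a' s * saDist P π ρ0 t s' a') := by
      intro t; rw [hmsucc t]; ring
    rw [tsum_congr h3, tsum_mul_left]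
    have h4 : ∑' t : ℕ, γ ^ t * ∑ s' : S, ∑ a' : A, P s' a' s * saDist P π ρ0 t s' a'
        = ∑ s' : S, ∑ a' : A, P s' a' s * T s' a' := by
      have e1 : ∀ t : ℕ, γ ^ t * ∑ s' : S, ∑ a' : A, P s' a' s * saDist P π ρ0 t s' a'
          = ∑ s' : S, ∑ a' : A, γ ^ t * (P s' a' s * saDist P π ρ0 t s' a') := by
        intro t
        rw [Finset.mul_sum]
        exact Finset.sum_congr rfl fun s' _ => by rw [Finset.mul_sum]
      rw [tsum_congr e1, Summable.tsum_finsetSum (fun s' _ => summable_sum fun a' _ => hsm s' a')]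
      refine Finset.sum_congr rfl fun s' _ => ?_
      rw [Summable.tsum_finsetSum (fun a' _ => hsm s' a')]
      refine Finset.sum_congr rfl fun a' _ => ?_
      rw [← tsum_mul_left]
      exact tsum_congr fun t => by ring
    rw [h4]
    have h5 : ∑ s' : S, ∑ a' : A, P s' a' s * occE γ P π ρ0 (s', a')
        = (1 - γ) * ∑ s' : S, ∑ a' : A, P s' a' s * T s' a' := by
      rw [Finset.mul_sum]
      refine Finset.sum_congr rfl fun s' _ => ?_
      rw [Finset.mul_sum]
      refine Finset.sum_congr rfl fun a' _ => ?_
      show P s' a' s * ((1 - γ) * T s' a') = _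
      ring
    rw [h5]
    ring

/-- Strict first-order condition: a strictly concave function lies strictly below
its tangent at any other point of the set. -/
lemma strict_tangent {n : Type*} [Fintype n]
    {s : Set (EuclideanSpace ℝ n)} {F : EuclideanSpace ℝ n → ℝ}
    (hF : StrictConcaveOn ℝ s F) {x y : EuclideanSpace ℝ n} {g : EuclideanSpace ℝ n}
    (hx : x ∈ s) (hy : y ∈ s) (hxy : x ≠ y) (hg : HasGradientAt F g x) :
    F y < F x + ⟪g, y - x⟫ := by
  set d : EuclideanSpace ℝ n := y - x with hd
  set m : EuclideanSpace ℝ n := (1/2 : ℝ) • x + (1/2 : ℝ) • y with hm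
  have hms : m ∈ s := hF.1 hx hy (by norm_num) (by norm_num) (by norm_num)
  have hmid : F y - F x < 2 * (F m - F x) := by
    have := hF.2 hx hy hxy (by norm_num : (0:ℝ) < 1/2) (by norm_num : (0:ℝ) < 1/2)
      (by norm_num)
    simp only [smul_eq_mul] at this
    rw [← hm] at this
    linarith
  -- derivative of t ↦ F (x + t • d) at 0 is ⟪g, d⟫
  have hline : ∀ t : ℝ, HasDerivAt (fun t : ℝ => x + t • d) d t := by
    intro t
    simpa using ((hasDerivAt_id t).smul_const d).const_add x
  have hcomp : HasDerivAt (fun t : ℝ => F (x + t • d)) ⟪g, d⟫ 0 := by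
    have h0 : HasFDerivAt F ((InnerProductSpace.toDual ℝ (EuclideanSpace ℝ n)) g)
        (x + (0:ℝ) • d) := by simpa using hg.hasFDerivAt
    have h1 := h0.comp_hasDerivAt 0 (hline 0)
    have h1' : HasDerivAt (F ∘ fun t : ℝ => x + t • d) ⟪g, d⟫ 0 := by
      simpa [InnerProductSpace.toDual_apply_apply] using h1
    exact h1'
  have hslope : Filter.Tendsto (fun t : ℝ => (F (x + t • d) - F x) / t)
      (nhdsWithin 0 (Set.Ioi 0)) (nhds ⟪g, d⟫) := by
    have h := hcomp.hasDerivWithinAt (s := Set.Ioi (0:ℝ))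
    have h2 := (hasDerivWithinAt_iff_tendsto_slope.mp h)
    have h3 : nhdsWithin (0:ℝ) (Set.Ioi 0 \ {0}) = nhdsWithin 0 (Set.Ioi 0) := by
      congr 1
      ext t
      simp only [Set.mem_diff, Set.mem_Ioi, Set.mem_singleton_iff]
      constructor
      · exact fun ht => ht.1
      · exact fun ht => ⟨ht, ne_of_gt ht⟩
    rw [h3] at h2
    refine h2.congr' ?_
    filter_upwards [self_mem_nhdsWithin] with t ht
    simp only [slope_def_field, div_eq_inv_mul]
    rw [show x + (0:ℝ) • d = x by simp]
    field_simp
    rw [sub_zero]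
  have hbound : ∀ᶠ t : ℝ in nhdsWithin 0 (Set.Ioi 0),
      2 * (F m - F x) ≤ (F (x + t • d) - F x) / t := by
    filter_upwards [Ioo_mem_nhdsGT_of_mem (by norm_num : (0:ℝ) ∈ Set.Ico 0 (1/2))]
      with t ht
    obtain ⟨ht0, ht2⟩ := ht
    have hconc := hF.concaveOn.2 hx hms (by linarith : (0:ℝ) ≤ 1 - 2*t)
      (by linarith : (0:ℝ) ≤ 2*t) (by ring)
    have hcomb : (1 - 2*t) • x + (2*t) • m = x + t • d := by
      rw [hm, hd]
      rw [smul_add, smul_smul, smul_smul]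
      rw [smul_sub]
      module
    rw [hcomb] at hconc
    simp only [smul_eq_mul] at hconc
    rw [le_div_iff₀ ht0]
    nlinarith [hconc]
  have hineq : 2 * (F m - F x) ≤ ⟪g, d⟫ :=
    ge_of_tendsto hslope hbound
  calc F y < F x + 2 * (F m - F x) := by linarith
    _ ≤ F x + ⟪g, d⟫ := by linarith

end aux

/-- Uniqueness of the Nash occupancy measure for a strictly concave potential:
if `F` is strictly concave and differentiable on `M`, with MFG reward
`R(·,μ) = ∇F(μ)`, and `π`, `π'` are both Nash equilibria (zero exploitability),
then `μ_π = μ_{π'}`. -/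
theorem stmt19 {S A : Type*} [Fintype S] [Fintype A] [Nonempty S] [Nonempty A]
    (γ : ℝ) (hγ : γ ∈ Set.Ioo (0 : ℝ) 1)
    (P : S → A → S → ℝ) (hP : IsKernel P)
    (ρ0 : S → ℝ) (hρ0 : IsDist ρ0)
    (F : EuclideanSpace ℝ (S × A) → ℝ)
    (R : EuclideanSpace ℝ (S × A) → EuclideanSpace ℝ (S × A))
    (hF : StrictConcaveOn ℝ (MflowE γ P ρ0) F)
    (hgrad : ∀ μ ∈ MflowE γ P ρ0, HasGradientAt F (R μ) μ)
    (π π' : S → A → ℝ) (hπ : IsPolicy π) (hπ' : IsPolicy π')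
    (hNash : ∀ π'' : S → A → ℝ, IsPolicy π'' →
      ⟪occE γ P π'' ρ0, R (occE γ P π ρ0)⟫ ≤ ⟪occE γ P π ρ0, R (occE γ P π ρ0)⟫)
    (hNash' : ∀ π'' : S → A → ℝ, IsPolicy π'' →
      ⟪occE γ P π'' ρ0, R (occE γ P π' ρ0)⟫ ≤ ⟪occE γ P π' ρ0, R (occE γ P π' ρ0)⟫) :
    occE γ P π ρ0 = occE γ P π' ρ0 := by
  classical
  set μ : EuclideanSpace ℝ (S × A) := occE γ P π ρ0 with hμ
  set ν : EuclideanSpace ℝ (S × A) := occE γ P π' ρ0 with hν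
  by_contra hne
  have hμM : μ ∈ MflowE γ P ρ0 := occE_mem_MflowE hγ hP hπ hρ0
  have hνM : ν ∈ MflowE γ P ρ0 := occE_mem_MflowE hγ hP hπ' hρ0
  have h1 : F ν < F μ + ⟪R μ, ν - μ⟫ :=
    strict_tangent hF hμM hνM hne (hgrad μ hμM)
  have h2 : F μ < F ν + ⟪R ν, μ - ν⟫ :=
    strict_tangent hF hνM hμM (Ne.symm hne) (hgrad ν hνM)
  have h3 : (0:ℝ) < ⟪R μ, ν - μ⟫ + ⟪R ν, μ - ν⟫ := by linarith
  have e1 : ⟪R μ, ν - μ⟫ = ⟪ν, R μ⟫ - ⟪μ, R μ⟫ := by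
    rw [inner_sub_right, real_inner_comm (R μ) ν, real_inner_comm (R μ) μ]
  have e2 : ⟪R ν, μ - ν⟫ = ⟪μ, R ν⟫ - ⟪ν, R ν⟫ := by
    rw [inner_sub_right, real_inner_comm (R ν) μ, real_inner_comm (R ν) ν]
  have hN1 : ⟪ν, R μ⟫ ≤ ⟪μ, R μ⟫ := hNash π' hπ'
  have hN2 : ⟪μ, R ν⟫ ≤ ⟪ν, R ν⟫ := hNash' π hπ
  rw [e1, e2] at h3
  linarith
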